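/- Let N ≥ 3, 2 < p < 2N/(N-2), ρ > 0, and let K_* be as above (bounded away from a neighborhood of 0, with v ↦ K_*^{1/p}v compact from H¹ to L^p_loc). If {u_n} is bounded in H¹(ℝ^N) and sup_{y ∈ ℝ^N} ∫_{B(y,ρ)} |u_n|² dx → 0 as n → ∞, then ∫_{ℝ^N} K_*(x)|u_n|^p dx → 0. -/

import Mathlib

open MeasureTheory Filter
open scoped Topology
open scoped ENNReal NNReal

namespace WLV

open Set Function Finset



/-- FTC bound for merely differentiable compactly supported real functions. -/
lemma ennnorm_le_lintegral_Iic_deriv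
    {f : ℝ → ℝ} (hf : Differentiable ℝ f) (h'f : HasCompactSupport f) (x : ℝ) :
    (‖f x‖₊ : ℝ≥0∞) ≤ ∫⁻ y in Iic x, ‖deriv f y‖₊ := by
  by_cases h : (∫⁻ y in Iic x, (‖deriv f y‖₊ : ℝ≥0∞)) = ∞
  · exact h ▸ le_top
  have hint : IntegrableOn (deriv f) (Iic x) volume := by
    refine ⟨(measurable_deriv f).aestronglyMeasurable.restrict, ?_⟩
    unfold HasFiniteIntegral
    exact lt_of_le_of_ne le_top h
  have htend : Tendsto f atBot (𝓝 0) := by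
    rw [hasCompactSupport_iff_eventuallyEq, Filter.coclosedCompact_eq_cocompact] at h'f
    exact h'f.filter_mono _root_.atBot_le_cocompact |>.tendsto
  have hFTC : ∫ y in Iic x, deriv f y = f x - 0 :=
    integral_Iic_of_hasDerivAt_of_tendsto (hf x).continuousAt.continuousWithinAt
      (fun y _ => (hf y).hasDerivAt) hint htend
  rw [sub_zero] at hFTC
  calc (‖f x‖₊ : ℝ≥0∞) = ‖∫ y in Iic x, deriv f y‖₊ := by rw [hFTC]
    _ ≤ ∫⁻ y in Iic x, ‖deriv f y‖₊ := enorm_integral_le_lintegral_enorm _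





variable {ι : Type*}
local prefix:max "#" => Fintype.card

theorem lintegral_pow_le_pow_lintegral_fderiv_aux [Fintype ι]
    {p : ℝ} (hp : Real.HolderConjugate #ι p)
    {u : (ι → ℝ) → ℝ} (hu : Differentiable ℝ u)
    (h2u : HasCompactSupport u) :
    ∫⁻ x, (‖u x‖₊ : ℝ≥0∞) ^ p ≤ (∫⁻ x, ‖fderiv ℝ u x‖₊) ^ p := by
  classical
  have : (1 : ℝ) ≤ ↑#ι - 1 := by
    have hι : (2 : ℝ) ≤ #ι := by exact_mod_cast hp.lt
    linarith
  calc ∫⁻ x, (‖u x‖₊ : ℝ≥0∞) ^ p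
      = ∫⁻ x, ((‖u x‖₊ : ℝ≥0∞) ^ (1 / (#ι - 1 : ℝ))) ^ (#ι : ℝ) := by
        congr! 2 with x
        rw [← ENNReal.rpow_mul, hp.conjugate_eq]
        field_simp
    _ = ∫⁻ x, ∏ _i : ι, (‖u x‖₊ : ℝ≥0∞) ^ (1 / (#ι - 1 : ℝ)) := by
        congr! 2 with x
        simp_rw [prod_const, card_univ]
        norm_cast
    _ ≤ ∫⁻ x, ∏ i, (∫⁻ xᵢ, ‖fderiv ℝ u (update x i xᵢ)‖₊) ^ ((1 : ℝ) / (#ι - 1 : ℝ)) := ?_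
    _ ≤ (∫⁻ x, ‖fderiv ℝ u x‖₊) ^ p := by
        apply lintegral_prod_lintegral_pow_le _ hp
        exact (measurable_fderiv ℝ u).nnnorm.coe_nnreal_ennreal
  gcongr with x i
  calc (‖u x‖₊ : ℝ≥0∞)
    _ ≤ ∫⁻ xᵢ in Iic (x i), ‖deriv (u ∘ update x i) xᵢ‖₊ := by
        apply le_trans (by simp) (ennnorm_le_lintegral_Iic_deriv ?_ ?_ _)
        · exact hu.comp ((contDiff_update 1 x i).differentiable one_ne_zero)
        · exact h2u.comp_isClosedEmbedding (isClosedEmbedding_update x i)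
    _ ≤ ∫⁻ xᵢ, (‖fderiv ℝ u (update x i xᵢ)‖₊ : ℝ≥0∞) := ?_
  gcongr with y
  · exact Measure.restrict_le_self
  calc ‖deriv (u ∘ update x i) y‖₊ = ‖fderiv ℝ u (update x i y) (deriv (update x i) y)‖₊ := by
        rw [fderiv_comp_deriv _ (hu _)
          (hasDerivAt_update x i y).differentiableAt]
    _ ≤ ‖fderiv ℝ u (update x i y)‖₊ * ‖deriv (update x i) y‖₊ :=
        ContinuousLinearMap.le_opNNNorm ..
    _ ≤ ‖fderiv ℝ u (update x i y)‖₊ := by simp [deriv_update, Pi.nnnorm_single]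




variable {ι : Type*}


/-- Constant in the Euclidean Sobolev inequality. -/
noncomputable def SC (N : ℕ) : ℝ≥0∞ :=
  (‖(((EuclideanSpace.equiv (Fin N) ℝ).symm : (Fin N → ℝ) ≃L[ℝ] EuclideanSpace ℝ (Fin N)) :
      (Fin N → ℝ) →L[ℝ] EuclideanSpace ℝ (Fin N))‖₊ : ℝ≥0∞)

lemma SC_ne_top (N : ℕ) : SC N ≠ ∞ := ENNReal.coe_ne_top

theorem lintegral_pow_le_pow_lintegral_fderiv_euclidean {N : ℕ}
    {p : ℝ} (hp : Real.HolderConjugate N p)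
    {u : EuclideanSpace ℝ (Fin N) → ℝ} (hu : Differentiable ℝ u)
    (h2u : HasCompactSupport u) :
    ∫⁻ x, (‖u x‖₊ : ℝ≥0∞) ^ p ≤ (SC N) ^ p * (∫⁻ x, ‖fderiv ℝ u x‖₊) ^ p := by
  set e := EuclideanSpace.equiv (Fin N) ℝ
  set ME := (MeasurableEquiv.toLp 2 (Fin N → ℝ)).symm
  have hME : ⇑ME.symm = ⇑e.symm := rfl
  have hMP : MeasurePreserving (⇑ME.symm) (volume : Measure (Fin N → ℝ)) volume :=
    (EuclideanSpace.volume_preserving_symm_measurableEquiv_toLp (Fin N)).symm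
  have hcard : Real.HolderConjugate (Fintype.card (Fin N)) p := by simpa using hp
  let v : (Fin N → ℝ) → ℝ := u ∘ e.symm
  have hv : Differentiable ℝ v := hu.comp e.symm.differentiable
  have h2v : HasCompactSupport v := h2u.comp_homeomorph e.symm.toHomeomorph
  have h0p : 0 ≤ p := hp.symm.nonneg
  have key := lintegral_pow_le_pow_lintegral_fderiv_aux hcard hv h2v
  have e1 : ∫⁻ x, (‖u x‖₊ : ℝ≥0∞) ^ p = ∫⁻ y, (‖v y‖₊ : ℝ≥0∞) ^ p := by
    rw [← hMP.lintegral_comp (f := fun x => (‖u x‖₊ : ℝ≥0∞) ^ p)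
      (hu.continuous.measurable.nnnorm.coe_nnreal_ennreal.pow_const _)]
    rfl
  let L : (Fin N → ℝ) →L[ℝ] EuclideanSpace ℝ (Fin N) :=
    ((EuclideanSpace.equiv (Fin N) ℝ).symm :
      (Fin N → ℝ) ≃L[ℝ] EuclideanSpace ℝ (Fin N))
  have hSC : SC N = (‖L‖₊ : ℝ≥0∞) := rfl
  have e2 : ∫⁻ y, (‖fderiv ℝ v y‖₊ : ℝ≥0∞) ≤ SC N * ∫⁻ x, ‖fderiv ℝ u x‖₊ := by
    have hb : ∀ y, (‖fderiv ℝ v y‖₊ : ℝ≥0∞) ≤ SC N * ‖fderiv ℝ u (e.symm y)‖₊ := by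
      intro y
      have hfd : fderiv ℝ v y = (fderiv ℝ u (e.symm y)).comp L := by
        rw [show v = u ∘ e.symm from rfl, fderiv_comp y (hu _) e.symm.differentiableAt,
          e.symm.fderiv]
      rw [hfd, hSC, ← ENNReal.coe_mul, ENNReal.coe_le_coe, mul_comm]
      exact ContinuousLinearMap.opNNNorm_comp_le _ _
    calc ∫⁻ y, (‖fderiv ℝ v y‖₊ : ℝ≥0∞)
        ≤ ∫⁻ y, SC N * ‖fderiv ℝ u (e.symm y)‖₊ := lintegral_mono hb
      _ = SC N * ∫⁻ y, (‖fderiv ℝ u (e.symm y)‖₊ : ℝ≥0∞) :=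
          lintegral_const_mul' _ _ (SC_ne_top N)
      _ = SC N * ∫⁻ x, (‖fderiv ℝ u x‖₊ : ℝ≥0∞) := by
          congr 1
          exact hMP.lintegral_comp (f := fun x => (‖fderiv ℝ u x‖₊ : ℝ≥0∞))
            (measurable_fderiv ℝ u).nnnorm.coe_nnreal_ennreal
  calc ∫⁻ x, (‖u x‖₊ : ℝ≥0∞) ^ p = ∫⁻ y, (‖v y‖₊ : ℝ≥0∞) ^ p := e1
    _ ≤ (∫⁻ y, ‖fderiv ℝ v y‖₊) ^ p := key
    _ ≤ (SC N * ∫⁻ x, ‖fderiv ℝ u x‖₊) ^ p := by gcongr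
    _ = (SC N) ^ p * (∫⁻ x, ‖fderiv ℝ u x‖₊) ^ p := ENNReal.mul_rpow_of_nonneg _ _ h0p

theorem eLpNorm_le_eLpNorm_fderiv_one_euclidean {N : ℕ}
    {p' : ℝ≥0} (hp : NNReal.HolderConjugate N p')
    {u : EuclideanSpace ℝ (Fin N) → ℝ} (hu : Differentiable ℝ u)
    (h2u : HasCompactSupport u) :
    eLpNorm u p' volume ≤ SC N * eLpNorm (fderiv ℝ u) 1 volume := by
  have h0p : 0 < (p' : ℝ) := hp.symm.pos
  have key := lintegral_pow_le_pow_lintegral_fderiv_euclidean hp.coe hu h2u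
  rw [eLpNorm_one_eq_lintegral_enorm, eLpNorm_nnreal_eq_lintegral hp.symm.pos.ne']
  calc (∫⁻ x, (‖u x‖₊ : ℝ≥0∞) ^ (p' : ℝ)) ^ (1 / (p' : ℝ))
      ≤ ((SC N) ^ (p' : ℝ) * (∫⁻ x, ‖fderiv ℝ u x‖₊) ^ (p' : ℝ)) ^ (1 / (p' : ℝ)) := by gcongr
    _ = SC N * ∫⁻ x, ‖fderiv ℝ u x‖₊ := by
        rw [ENNReal.mul_rpow_of_nonneg _ _ (by positivity), ← ENNReal.rpow_mul,
          ← ENNReal.rpow_mul, mul_one_div_cancel h0p.ne', ENNReal.rpow_one, ENNReal.rpow_one]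






/-- Sobolev inequality on Euclidean space for differentiable compactly supported functions. -/
theorem sobolev_inner {N : ℕ} {p p' : ℝ≥0} (hp : 1 ≤ p)
    (hn0 : 0 < N) (hp' : (p' : ℝ)⁻¹ = (p : ℝ)⁻¹ - (N : ℝ)⁻¹) :
    ∃ C : ℝ≥0∞, C ≠ ∞ ∧ ∀ u : EuclideanSpace ℝ (Fin N) → ℝ,
      Differentiable ℝ u → HasCompactSupport u →
      eLpNorm u p' volume ≤ C * eLpNorm (fderiv ℝ u) p volume := by
  by_cases hp'0 : p' = 0
  · exact ⟨1, ENNReal.one_ne_top, fun u _ _ => by simp [hp'0]⟩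
  set n := N
  let n' := NNReal.conjExponent n
  have h2p : (p : ℝ) < n := by
    have : 0 < p⁻¹ - (n : ℝ)⁻¹ :=
      NNReal.coe_lt_coe.mpr (pos_iff_ne_zero.mpr (inv_ne_zero hp'0)) |>.trans_eq hp'
    rwa [NNReal.coe_inv, sub_pos,
      inv_lt_inv₀ _ (zero_lt_one.trans_le (NNReal.coe_le_coe.mpr hp))] at this
    exact_mod_cast hn0
  have h0n : 2 ≤ n := Nat.succ_le_of_lt <| Nat.one_lt_cast.mp <| hp.trans_lt h2p
  have hn : NNReal.HolderConjugate n n' := .conjExponent (by norm_cast)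
  have h1n : 1 ≤ (n : ℝ≥0) := hn.lt.le
  have h2n : (0 : ℝ) < n - 1 := by simp_rw [sub_pos]; exact hn.coe.lt
  have hnp : (0 : ℝ) < n - p := by simp_rw [sub_pos]; exact h2p
  -- the exponent γ
  let γ : ℝ≥0 := ⟨p * (n - 1) / (n - p), by positivity⟩
  have h0γ : (γ : ℝ) = p * (n - 1) / (n - p) := rfl
  refine ⟨SC N * γ, ENNReal.mul_ne_top (SC_ne_top N) ENNReal.coe_ne_top, fun u hu h2u => ?_⟩
  rcases hp.eq_or_lt with rfl|hp
  -- the case `p = 1`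
  · convert! eLpNorm_le_eLpNorm_fderiv_one_euclidean hn hu h2u using 2
    · suffices (p' : ℝ) = n' by simpa using this
      rw [← inv_inj, hp']
      simp [field, n', NNReal.conjExponent, *]
    · suffices (γ : ℝ) = 1 by
        norm_cast
        rw [show γ = 1 from by exact_mod_cast this, ENNReal.coe_one, mul_one]
      rw [h0γ]
      push_cast
      simpa using div_self h2n.ne'
  -- the case `p > 1`
  have h7u : Continuous u := hu.continuous
  let q := Real.conjExponent p
  have hq : Real.HolderConjugate p q := .conjExponent hp
  have h0p : p ≠ 0 := zero_lt_one.trans hp |>.ne'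
  have h1p : (p : ℝ) ≠ 1 := hq.lt.ne'
  have h3p : (p : ℝ) - 1 ≠ 0 := sub_ne_zero_of_ne h1p
  have h1γ : 1 < (γ : ℝ) := by
    rwa [h0γ, one_lt_div hnp, mul_sub, mul_one, sub_lt_sub_iff_right, lt_mul_iff_one_lt_left]
    exact hn.coe.pos
  have h4γ : (γ : ℝ) ≠ 0 := (zero_lt_one.trans h1γ).ne'
  have h0p' : p' ≠ 0 := hp'0
  have h2q : 1 / n' - 1 / q = 1 / p' := by
    simp_rw (config := {zeta := false}) [one_div, hp']
    rw [← hq.one_sub_inv, ← hn.coe.one_sub_inv, sub_sub_sub_cancel_left]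
    simp only [NNReal.coe_natCast, NNReal.coe_inv]
  have h2γ : γ * n' = p' := by
    rw [← NNReal.coe_inj, ← inv_inj, hp', NNReal.coe_mul, h0γ, hn.coe.conjugate_eq]
    field_simp; push_cast; ring
  have h3γ : ((γ : ℝ) - 1) * q = p' := by
    rw [← inv_inj, hp', h0γ, hq.conjugate_eq]
    have : (p : ℝ) * (n - 1) - (n - p) = n * (p - 1) := by ring
    field_simp [this]; ring
  by_cases h3u : ∫⁻ x, ‖u x‖ₑ ^ (p' : ℝ) = 0
  · rw [eLpNorm_nnreal_eq_lintegral h0p', h3u, ENNReal.zero_rpow_of_pos] <;> positivity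
  have h4u : ∫⁻ x, ‖u x‖ₑ ^ (p' : ℝ) ≠ ∞ := by
    refine lintegral_rpow_enorm_lt_top_of_eLpNorm'_lt_top
      ((NNReal.coe_pos.trans pos_iff_ne_zero).mpr h0p') ?_ |>.ne
    rw [← eLpNorm_nnreal_eq_eLpNorm' h0p']
    exact h7u.memLp_of_hasCompactSupport (μ := volume) h2u |>.eLpNorm_lt_top
  have h5u : (∫⁻ x, ‖u x‖ₑ ^ (p' : ℝ)) ^ (1 / q) ≠ 0 :=
    ENNReal.rpow_pos (pos_iff_ne_zero.mpr h3u) h4u |>.ne'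
  have h6u : (∫⁻ x, ‖u x‖ₑ ^ (p' : ℝ)) ^ (1 / q) ≠ ∞ :=
    ENNReal.rpow_ne_top_of_nonneg (div_nonneg zero_le_one hq.symm.nonneg) h4u
  let v : EuclideanSpace ℝ (Fin N) → ℝ := fun x ↦ ‖u x‖ ^ (γ : ℝ)
  have hv : Differentiable ℝ v := (differentiable_norm_rpow h1γ).comp hu
  have h2v : HasCompactSupport v := h2u.norm.rpow_const h4γ
  have hm1 : Measurable fun x => ‖u x‖ₑ := h7u.measurable.enorm
  have hm2 : Measurable fun x => ‖fderiv ℝ u x‖ₑ :=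
    (measurable_fderiv ℝ u).enorm
  set C := SC N
  have :=
  calc (∫⁻ x, ‖u x‖ₑ ^ (p' : ℝ)) ^ (1 / (n' : ℝ)) = eLpNorm v n' volume := by
        rw [← h2γ, eLpNorm_nnreal_eq_lintegral hn.symm.pos.ne']
        simp (discharger := positivity) [v, Real.enorm_rpow_of_nonneg, ENNReal.rpow_mul]
        rfl
    _ ≤ C * eLpNorm (fderiv ℝ v) 1 volume := eLpNorm_le_eLpNorm_fderiv_one_euclidean hn hv h2v
    _ = C * ∫⁻ x, ‖fderiv ℝ v x‖ₑ := by rw [eLpNorm_one_eq_lintegral_enorm]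
    _ ≤ C * γ * ∫⁻ x, ‖u x‖ₑ ^ ((γ : ℝ) - 1) * ‖fderiv ℝ u x‖ₑ := by
      rw [mul_assoc, ← lintegral_const_mul γ]
      gcongr
      simp_rw [← mul_assoc]
      exact enorm_fderiv_norm_rpow_le hu h1γ
      exact (hm1.pow_const _).mul hm2
    _ ≤ C * γ * ((∫⁻ x, ‖u x‖ₑ ^ (p' : ℝ)) ^ (1 / q) *
        (∫⁻ x, ‖fderiv ℝ u x‖ₑ ^ (p : ℝ)) ^ (1 / (p : ℝ))) := by
        gcongr
        convert! ENNReal.lintegral_mul_le_Lp_mul_Lq volume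
          (.symm <| .conjExponent <| show 1 < (p : ℝ) from hp) ?_ ?_ using 5
        · simp_rw [← ENNReal.rpow_mul, ← h3γ]; rfl
        · exact (hm1.pow_const _).aemeasurable
        · exact hm2.aemeasurable
    _ = C * γ * (∫⁻ x, ‖fderiv ℝ u x‖ₑ ^ (p : ℝ)) ^ (1 / (p : ℝ)) *
      (∫⁻ x, ‖u x‖ₑ ^ (p' : ℝ)) ^ (1 / q) := by ring
  calc
    eLpNorm u p' volume
      = (∫⁻ x, ‖u x‖ₑ ^ (p' : ℝ)) ^ (1 / (p' : ℝ)) := eLpNorm_nnreal_eq_lintegral h0p'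
    _ ≤ C * γ * (∫⁻ x, ‖fderiv ℝ u x‖ₑ ^ (p : ℝ)) ^ (1 / (p : ℝ)) := by
      rwa [← h2q, ENNReal.rpow_sub _ _ h3u h4u, ENNReal.div_le_iff h5u h6u]
    _ = C * γ * eLpNorm (fderiv ℝ u) p volume := by
      rw [eLpNorm_nnreal_eq_lintegral h0p]






lemma add_sq_le (a b : ℝ≥0∞) : (a + b) ^ (2:ℝ) ≤ 4 * (a ^ (2:ℝ) + b ^ (2:ℝ)) := by
  have h1 : a + b ≤ 2 * max a b := by
    rw [two_mul]
    exact add_le_add (le_max_left a b) (le_max_right a b)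
  have h2 : (2:ℝ≥0∞) ^ (2:ℝ) = 4 := by
    rw [show (2:ℝ) = ((2:ℕ):ℝ) by norm_num, ENNReal.rpow_natCast]
    norm_num
  calc (a + b) ^ (2:ℝ) ≤ (2 * max a b) ^ (2:ℝ) := ENNReal.rpow_le_rpow h1 (by norm_num)
    _ = (2:ℝ≥0∞) ^ (2:ℝ) * (max a b) ^ (2:ℝ) := ENNReal.mul_rpow_of_nonneg _ _ (by norm_num)
    _ ≤ 4 * (a ^ (2:ℝ) + b ^ (2:ℝ)) := by
        rw [h2]
        gcongr
        rcases le_total a b with h | h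
        · rw [max_eq_right h]
          exact le_add_self
        · rw [max_eq_left h]
          exact le_self_add

lemma glob_H {N : ℕ} (D : ℝ≥0∞) (hD1 : 1 ≤ D) (hDne : D ≠ ∞)
    (w : EuclideanSpace ℝ (Fin N) → ℝ) (M' : ℝ≥0∞)
    (h : (∫⁻ x, ((‖fderiv ℝ w x‖₊ : ℝ≥0∞) ^ (2:ℝ) + (‖w x‖₊ : ℝ≥0∞) ^ (2:ℝ))) ≤ M') :
    (∫⁻ x, ((‖fderiv ℝ w x‖₊ : ℝ≥0∞) + D * ‖w x‖₊) ^ (2:ℝ)) ≤ 4 * D ^ (2:ℝ) * M' := by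
  have hpt : ∀ x, ((‖fderiv ℝ w x‖₊ : ℝ≥0∞) + D * ‖w x‖₊) ^ (2:ℝ) ≤
      4 * D ^ (2:ℝ) * ((‖fderiv ℝ w x‖₊ : ℝ≥0∞) ^ (2:ℝ) + (‖w x‖₊ : ℝ≥0∞) ^ (2:ℝ)) := by
    intro x
    set a : ℝ≥0∞ := (‖fderiv ℝ w x‖₊ : ℝ≥0∞)
    set b : ℝ≥0∞ := (‖w x‖₊ : ℝ≥0∞)
    calc (a + D * b) ^ (2:ℝ) ≤ (D * (a + b)) ^ (2:ℝ) := by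
          apply ENNReal.rpow_le_rpow _ (by norm_num)
          rw [mul_add]
          exact add_le_add (le_mul_of_one_le_left zero_le hD1) le_rfl
      _ = D ^ (2:ℝ) * (a + b) ^ (2:ℝ) := ENNReal.mul_rpow_of_nonneg _ _ (by norm_num)
      _ ≤ D ^ (2:ℝ) * (4 * (a ^ (2:ℝ) + b ^ (2:ℝ))) := by
          gcongr
          exact add_sq_le a b
      _ = 4 * D ^ (2:ℝ) * (a ^ (2:ℝ) + b ^ (2:ℝ)) := by ring
  calc (∫⁻ x, ((‖fderiv ℝ w x‖₊ : ℝ≥0∞) + D * ‖w x‖₊) ^ (2:ℝ))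
      ≤ ∫⁻ x, 4 * D ^ (2:ℝ) *
          ((‖fderiv ℝ w x‖₊ : ℝ≥0∞) ^ (2:ℝ) + (‖w x‖₊ : ℝ≥0∞) ^ (2:ℝ)) := lintegral_mono hpt
    _ = 4 * D ^ (2:ℝ) *
          ∫⁻ x, ((‖fderiv ℝ w x‖₊ : ℝ≥0∞) ^ (2:ℝ) + (‖w x‖₊ : ℝ≥0∞) ^ (2:ℝ)) :=
        lintegral_const_mul' _ _
          (ENNReal.mul_ne_top (by norm_num) (ENNReal.rpow_ne_top_of_nonneg (by norm_num) hDne))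
    _ ≤ 4 * D ^ (2:ℝ) * M' := by gcongr

set_option maxHeartbeats 1000000 in
/-- Per-ball estimate: the key step of Lions' lemma. -/
theorem ball_est {N : ℕ} (hN : 3 ≤ N) {p : ℝ} (hp : 2 < p)
    (hp' : p < 2 * N / ((N : ℝ) - 2)) {ρ : ℝ} (hρ : 0 < ρ)
    (M' : ℝ≥0∞) (hM' : M' ≠ ∞) :
    ∃ (C : ℝ≥0∞) (α : ℝ) (D : ℝ≥0∞), C ≠ ∞ ∧ 0 < α ∧ 1 ≤ D ∧ D ≠ ∞ ∧
      ∀ w : EuclideanSpace ℝ (Fin N) → ℝ, Differentiable ℝ w →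
      (∫⁻ x, ((‖fderiv ℝ w x‖₊ : ℝ≥0∞) ^ (2:ℝ) + (‖w x‖₊ : ℝ≥0∞) ^ (2:ℝ))) ≤ M' →
      ∀ (c : EuclideanSpace ℝ (Fin N)) (s : ℝ≥0∞),
      (∫⁻ x in Metric.ball c ρ, (‖w x‖₊ : ℝ≥0∞) ^ (2:ℝ)) ≤ s →
      ∫⁻ x in Metric.ball c ρ, (‖w x‖₊ : ℝ≥0∞) ^ p ≤
        C * s ^ α *
          ∫⁻ x in Metric.closedBall c (2*ρ), ((‖fderiv ℝ w x‖₊ : ℝ≥0∞) + D * ‖w x‖₊) ^ (2:ℝ) := by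
  have hN2 : (0:ℝ) < (N:ℝ) - 2 := by
    have : (3:ℝ) ≤ N := by exact_mod_cast hN
    linarith
  have hN0 : 0 < N := by omega
  -- the Sobolev exponent
  have hq'pos : (0:ℝ) < 2 * N / ((N:ℝ) - 2) := by positivity
  set q' : ℝ≥0 := ⟨2 * N / ((N:ℝ) - 2), hq'pos.le⟩ with hq'def
  have hq'coe : (q' : ℝ) = 2 * N / ((N : ℝ) - 2) := rfl
  have hq'0 : q' ≠ 0 := by
    rw [← NNReal.coe_ne_zero, hq'coe]; positivity
  have hq'inv : (q' : ℝ)⁻¹ = ((2:ℝ≥0) : ℝ)⁻¹ - (N : ℝ)⁻¹ := by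
    rw [hq'coe]; push_cast
    rw [inv_div]
    field_simp
  have h2q' : (2:ℝ) < q' := by
    rw [hq'coe]
    rw [lt_div_iff₀ hN2]
    linarith
  have hpq' : p < (q' : ℝ) := by rw [hq'coe]; exact hp'
  -- Sobolev constant
  obtain ⟨CS, hCSne, hSob⟩ := sobolev_inner (N := N) (p := 2) (p' := q') (by norm_num) hN0 hq'inv
  -- bump function and its derivative bound
  let φ : ContDiffBump (0 : EuclideanSpace ℝ (Fin N)) := ⟨ρ, 2*ρ, hρ, by linarith⟩
  have hφdiff : Differentiable ℝ (φ : EuclideanSpace ℝ (Fin N) → ℝ) :=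
    (φ.contDiff (n := 1)).differentiable one_ne_zero
  have hφfc : Continuous (fun x => ‖fderiv ℝ (φ : EuclideanSpace ℝ (Fin N) → ℝ) x‖) :=
    ((φ.contDiff (n := 1)).continuous_fderiv (by simp)).norm
  obtain ⟨D₀, hD₀⟩ : ∃ D₀ : ℝ, ∀ x, ‖fderiv ℝ (φ : EuclideanSpace ℝ (Fin N) → ℝ) x‖ ≤ D₀ := by
    have hbdd := hφfc.bddAbove_range_of_hasCompactSupport
      ((φ.hasCompactSupport.fderiv ℝ).norm)
    obtain ⟨D₀, hD₀⟩ := hbdd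
    exact ⟨D₀, fun x => hD₀ (mem_range_self x)⟩
  set D : ℝ≥0∞ := ENNReal.ofReal (max D₀ 1) with hDdef
  have hD1 : 1 ≤ D := by
    rw [hDdef, ← ENNReal.ofReal_one]
    exact ENNReal.ofReal_le_ofReal (le_max_right _ _)
  have hDne : D ≠ ∞ := ENNReal.ofReal_ne_top
  have hDb : ∀ z, (‖fderiv ℝ (φ : EuclideanSpace ℝ (Fin N) → ℝ) z‖₊ : ℝ≥0∞) ≤ D := by
    intro z
    rw [← enorm_eq_nnnorm, ← ofReal_norm_eq_enorm, hDdef]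
    exact ENNReal.ofReal_le_ofReal ((hD₀ z).trans (le_max_left _ _))
  -- interpolation exponents
  set a : ℝ := ((q':ℝ) - p) / ((q':ℝ) - 2) with hadef
  set b : ℝ := (p - 2) / ((q':ℝ) - 2) with hbdef
  have hq'2 : (0:ℝ) < (q':ℝ) - 2 := by linarith
  have ha : 0 < a := div_pos (by linarith) hq'2
  have hb : 0 < b := div_pos (by linarith) hq'2
  have hab : a + b = 1 := by
    rw [hadef, hbdef, ← add_div, div_eq_one_iff_eq hq'2.ne']
    ring
  have hsum : 2 * a + (q':ℝ) * b = p := by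
    rw [hadef, hbdef]; field_simp; ring
  set α : ℝ := min a ((p - 2)/2) with hαdef
  have hα : 0 < α := lt_min ha (by linarith)
  have hαa : α ≤ a := min_le_left _ _
  have hαp : α ≤ (p-2)/2 := min_le_right _ _
  set t : ℝ := (q':ℝ) * b with htdef
  have ht : 0 < t := mul_pos (by positivity) hb
  have hat : a + t/2 = p/2 := by rw [htdef]; linarith [hsum]
  have he1 : (1:ℝ) ≤ p/2 - α := by linarith
  -- the final constant
  set M'' : ℝ≥0∞ := 4 * D ^ (2:ℝ) * M' with hM''def
  have hM''ne : M'' ≠ ∞ := ENNReal.mul_ne_top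
    (ENNReal.mul_ne_top (by norm_num) (ENNReal.rpow_ne_top_of_nonneg (by norm_num) hDne)) hM'
  refine ⟨CS ^ t * M'' ^ (p/2 - α - 1), α, D, ?_, hα, hD1, hDne, ?_⟩
  · exact ENNReal.mul_ne_top (ENNReal.rpow_ne_top_of_nonneg ht.le hCSne)
      (ENNReal.rpow_ne_top_of_nonneg (by linarith) hM''ne)
  intro w hw hglob2 c s hs
  have hglob : (∫⁻ x, ((‖fderiv ℝ w x‖₊ : ℝ≥0∞) + D * ‖w x‖₊) ^ (2:ℝ)) ≤ M'' :=
    glob_H D hD1 hDne w M' hglob2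
  set H : EuclideanSpace ℝ (Fin N) → ℝ≥0∞ :=
    fun x => ((‖fderiv ℝ w x‖₊ : ℝ≥0∞) + D * ‖w x‖₊) ^ (2:ℝ) with hHdef
  set A : ℝ≥0∞ := ∫⁻ x in Metric.closedBall c (2*ρ), H x with hAdef
  have hwm : Measurable fun x => (‖w x‖₊ : ℝ≥0∞) :=
    hw.continuous.measurable.nnnorm.coe_nnreal_ennreal
  have hfm : Measurable fun x => (‖fderiv ℝ w x‖₊ : ℝ≥0∞) :=
    (measurable_fderiv ℝ w).nnnorm.coe_nnreal_ennreal
  have hHm : Measurable H := by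
    apply Measurable.pow_const
    exact hfm.add (measurable_const.mul hwm)
  have hwH : ∀ x, (‖w x‖₊ : ℝ≥0∞) ^ (2:ℝ) ≤ H x := by
    intro x
    apply ENNReal.rpow_le_rpow _ (by norm_num)
    calc (‖w x‖₊ : ℝ≥0∞) = 1 * ‖w x‖₊ := (one_mul _).symm
      _ ≤ D * ‖w x‖₊ := by gcongr
      _ ≤ _ := le_add_self
  have hAM : A ≤ M'' := le_trans (setLIntegral_le_lintegral _ _) hglob
  have hL2A : (∫⁻ x in Metric.ball c ρ, (‖w x‖₊ : ℝ≥0∞) ^ (2:ℝ)) ≤ A := by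
    calc (∫⁻ x in Metric.ball c ρ, (‖w x‖₊ : ℝ≥0∞) ^ (2:ℝ))
        ≤ ∫⁻ x in Metric.ball c ρ, H x := lintegral_mono fun x => hwH x
      _ ≤ A := lintegral_mono_set (by
          intro x hx
          rw [Metric.mem_closedBall]
          rw [Metric.mem_ball] at hx
          linarith)
  -- the cutoff function
  set χ : EuclideanSpace ℝ (Fin N) → ℝ := fun x => φ (x - c) with hχdef
  have hχdiff : Differentiable ℝ χ := hφdiff.comp (differentiable_id.sub_const c)
  have hχ1 : ∀ x ∈ Metric.closedBall c ρ, χ x = 1 := by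
    intro x hx
    apply φ.one_of_mem_closedBall
    rw [Metric.mem_closedBall, dist_zero_right]
    rw [Metric.mem_closedBall, dist_eq_norm] at hx
    exact hx
  have hχ0 : ∀ x, 2*ρ ≤ dist x c → χ x = 0 := by
    intro x hx
    have : x - c ∉ Function.support (φ : EuclideanSpace ℝ (Fin N) → ℝ) := by
      rw [φ.support_eq]
      intro hmem
      rw [Metric.mem_ball, dist_eq_norm, sub_zero, ← dist_eq_norm] at hmem
      exact absurd hmem (not_lt.mpr hx)
    simpa [hχdef] using Function.notMem_support.mp this
  have hχ01 : ∀ x, ‖χ x‖ ≤ 1 := by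
    intro x
    rw [Real.norm_eq_abs, abs_of_nonneg φ.nonneg]
    exact φ.le_one
  have hχfd : ∀ x, fderiv ℝ χ x = fderiv ℝ (φ : EuclideanSpace ℝ (Fin N) → ℝ) (x - c) := by
    intro x
    have h1 : HasFDerivAt (φ : EuclideanSpace ℝ (Fin N) → ℝ)
        (fderiv ℝ (φ : EuclideanSpace ℝ (Fin N) → ℝ) (x - c)) (x - c) :=
      (hφdiff (x - c)).hasFDerivAt
    have h2 : HasFDerivAt (fun z : EuclideanSpace ℝ (Fin N) => z - c)
        (ContinuousLinearMap.id ℝ _) x := (hasFDerivAt_id x).sub_const c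
    have := h1.comp x h2
    rw [ContinuousLinearMap.comp_id] at this
    exact this.fderiv
  -- the localized function g
  set g : EuclideanSpace ℝ (Fin N) → ℝ := fun x => χ x * w x with hgdef
  have hgdiff : Differentiable ℝ g := hχdiff.mul hw
  have hgsupp : HasCompactSupport g := by
    apply HasCompactSupport.intro (isCompact_closedBall c (2*ρ))
    intro x hx
    rw [Metric.mem_closedBall, not_le] at hx
    simp [hgdef, hχ0 x hx.le]
  have hgw : ∀ x ∈ Metric.ball c ρ, g x = w x := by
    intro x hx
    have : χ x = 1 := hχ1 x (Metric.ball_subset_closedBall hx)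
    simp [hgdef, this]
  have hgfd : ∀ x, (‖fderiv ℝ g x‖₊ : ℝ≥0∞) ^ (2:ℝ) ≤
      (Metric.closedBall c (2*ρ)).indicator H x := by
    intro x
    by_cases hx : x ∈ Metric.closedBall c (2*ρ)
    · rw [Set.indicator_of_mem hx]
      apply ENNReal.rpow_le_rpow _ (by norm_num)
      rw [hgdef, fderiv_fun_mul (hχdiff x) (hw x)]
      have hb1 : ‖χ x • fderiv ℝ w x‖₊ ≤ ‖fderiv ℝ w x‖₊ := by
        rw [nnnorm_smul]
        have h1 : ‖χ x‖₊ ≤ 1 := by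
          rw [← NNReal.coe_le_coe]
          simpa [coe_nnnorm] using hχ01 x
        calc ‖χ x‖₊ * ‖fderiv ℝ w x‖₊ ≤ 1 * ‖fderiv ℝ w x‖₊ := by gcongr
          _ = _ := one_mul _
      have hb2 : (‖w x • fderiv ℝ χ x‖₊ : ℝ≥0∞) ≤ D * ‖w x‖₊ := by
        rw [nnnorm_smul]
        push_cast
        rw [mul_comm]
        gcongr
        rw [hχfd x]
        exact hDb _
      calc ((‖χ x • fderiv ℝ w x + w x • fderiv ℝ χ x‖₊ : ℝ≥0∞))
          ≤ (‖χ x • fderiv ℝ w x‖₊ : ℝ≥0∞) + ‖w x • fderiv ℝ χ x‖₊ := by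
            exact_mod_cast nnnorm_add_le _ _
        _ ≤ (‖fderiv ℝ w x‖₊ : ℝ≥0∞) + D * ‖w x‖₊ :=
            add_le_add (by exact_mod_cast hb1) hb2
    · have h0 : fderiv ℝ g x = 0 := by
        have hev : g =ᶠ[𝓝 x] (fun _ => (0:ℝ)) := by
          rw [Metric.mem_closedBall, not_le] at hx
          have hopen : IsOpen {z : EuclideanSpace ℝ (Fin N) | 2*ρ < dist z c} :=
            isOpen_lt continuous_const (continuous_id.dist continuous_const)
          filter_upwards [hopen.mem_nhds hx] with z hz
          simp [hgdef, hχ0 z (le_of_lt hz)]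
        rw [hev.fderiv_eq, fderiv_const_apply]
      rw [h0]
      simp only [nnnorm_zero, ENNReal.coe_zero]
      rw [ENNReal.zero_rpow_of_pos (by norm_num)]
      exact zero_le
  -- Sobolev applied to g
  have hSg := hSob g hgdiff hgsupp
  have hQ : (∫⁻ x in Metric.ball c ρ, (‖w x‖₊ : ℝ≥0∞) ^ (q':ℝ)) ≤ CS ^ (q':ℝ) * A ^ ((q':ℝ)/2) := by
    have hLHS : (∫⁻ x in Metric.ball c ρ, (‖w x‖₊ : ℝ≥0∞) ^ (q':ℝ)) ^ (1/(q':ℝ)) ≤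
        eLpNorm g q' volume := by
      rw [eLpNorm_nnreal_eq_lintegral hq'0]
      apply ENNReal.rpow_le_rpow _ (by positivity)
      calc (∫⁻ x in Metric.ball c ρ, (‖w x‖₊ : ℝ≥0∞) ^ (q':ℝ))
          = ∫⁻ x in Metric.ball c ρ, (‖g x‖₊ : ℝ≥0∞) ^ (q':ℝ) := by
            apply setLIntegral_congr_fun Metric.isOpen_ball.measurableSet
            exact fun x hx => by simp only [hgw x hx]
        _ ≤ ∫⁻ x, (‖g x‖₊ : ℝ≥0∞) ^ (q':ℝ) := setLIntegral_le_lintegral _ _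
    have hRHS : eLpNorm (fderiv ℝ g) ((2:ℝ≥0) : ℝ≥0∞) volume ≤ A ^ ((1:ℝ)/2) := by
      rw [eLpNorm_eq_lintegral_rpow_enorm_toReal (by norm_num) (by norm_num)]
      rw [show (((2:ℝ≥0) : ℝ≥0∞)).toReal = (2:ℝ) by simp]
      apply ENNReal.rpow_le_rpow _ (by norm_num)
      calc ∫⁻ x, (‖fderiv ℝ g x‖₊ : ℝ≥0∞) ^ (2:ℝ)
          ≤ ∫⁻ x, (Metric.closedBall c (2*ρ)).indicator H x := lintegral_mono hgfd
        _ = A := by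
            rw [lintegral_indicator measurableSet_closedBall]
    have step : (∫⁻ x in Metric.ball c ρ, (‖w x‖₊ : ℝ≥0∞) ^ (q':ℝ)) ^ (1/(q':ℝ)) ≤
        CS * A ^ ((1:ℝ)/2) := hLHS.trans (hSg.trans (by gcongr))
    have := ENNReal.rpow_le_rpow step (le_of_lt (by positivity : (0:ℝ) < q'))
    rwa [← ENNReal.rpow_mul, one_div, inv_mul_cancel₀ (by positivity : (q':ℝ) ≠ 0),
      ENNReal.rpow_one, ENNReal.mul_rpow_of_nonneg _ _ (by positivity : (0:ℝ) ≤ q'),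
      ← ENNReal.rpow_mul, div_mul_eq_mul_div, one_mul] at this
  -- Hölder interpolation on the ball
  have hconj : Real.HolderConjugate (1/a) (1/b) := by
    constructor
    · rw [one_div, one_div, inv_inv, inv_inv, inv_one]
      exact hab
    · positivity
    · positivity
  have h1a : 1 / (1/a) = a := by field_simp
  have h1b : 1 / (1/b) = b := by field_simp
  have hfg : ∀ x : EuclideanSpace ℝ (Fin N),
      ((‖w x‖₊ : ℝ≥0∞) ^ (2*a)) ^ (1/a) = (‖w x‖₊ : ℝ≥0∞) ^ (2:ℝ) := fun x => by
    rw [← ENNReal.rpow_mul]; congr 1; field_simp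
  have hgg : ∀ x : EuclideanSpace ℝ (Fin N),
      ((‖w x‖₊ : ℝ≥0∞) ^ ((q':ℝ)*b)) ^ (1/b) = (‖w x‖₊ : ℝ≥0∞) ^ (q':ℝ) := fun x => by
    rw [← ENNReal.rpow_mul]; congr 1; field_simp
  have hHolder : (∫⁻ x in Metric.ball c ρ, (‖w x‖₊ : ℝ≥0∞) ^ p) ≤
      (∫⁻ x in Metric.ball c ρ, (‖w x‖₊ : ℝ≥0∞) ^ (2:ℝ)) ^ a *
      (∫⁻ x in Metric.ball c ρ, (‖w x‖₊ : ℝ≥0∞) ^ (q':ℝ)) ^ b := by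
    have hH := ENNReal.lintegral_mul_le_Lp_mul_Lq (volume.restrict (Metric.ball c ρ)) hconj
      (f := fun x => (‖w x‖₊ : ℝ≥0∞) ^ (2*a)) (g := fun x => (‖w x‖₊ : ℝ≥0∞) ^ ((q':ℝ)*b))
      ((hwm.pow_const _).aemeasurable) ((hwm.pow_const _).aemeasurable)
    simp only [Pi.mul_apply] at hH
    rw [h1a, h1b] at hH
    rw [lintegral_congr hfg, lintegral_congr hgg] at hH
    refine le_trans (le_of_eq ?_) hH
    apply lintegral_congr
    intro x
    rw [← ENNReal.rpow_add_of_nonneg _ _ (by positivity) (by positivity), hsum]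
  -- combine everything
  set L2 : ℝ≥0∞ := ∫⁻ x in Metric.ball c ρ, (‖w x‖₊ : ℝ≥0∞) ^ (2:ℝ) with hL2def
  calc ∫⁻ x in Metric.ball c ρ, (‖w x‖₊ : ℝ≥0∞) ^ p
      ≤ L2 ^ a * (CS ^ (q':ℝ) * A ^ ((q':ℝ)/2)) ^ b := by
        refine hHolder.trans ?_
        exact mul_le_mul' le_rfl (ENNReal.rpow_le_rpow hQ hb.le)
    _ = L2 ^ α * L2 ^ (a - α) * (CS ^ t * A ^ (t/2)) := by
        rw [htdef]
        rw [show L2 ^ a = L2 ^ α * L2 ^ (a - α) from by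
          rw [← ENNReal.rpow_add_of_nonneg _ _ hα.le (by linarith)]; congr 1; ring,
          ENNReal.mul_rpow_of_nonneg _ _ hb.le, ← ENNReal.rpow_mul, ← ENNReal.rpow_mul]
        congr 1
        congr 1
        ring
    _ ≤ s ^ α * A ^ (a - α) * (CS ^ t * A ^ (t/2)) :=
        mul_le_mul' (mul_le_mul' (ENNReal.rpow_le_rpow hs hα.le)
          (ENNReal.rpow_le_rpow hL2A (by linarith))) le_rfl
    _ = CS ^ t * s ^ α * A ^ ((a - α) + t/2) := by
        rw [ENNReal.rpow_add_of_nonneg (a - α) (t/2) (by linarith) (by positivity)]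
        ring
    _ = CS ^ t * s ^ α * (A ^ ((p/2 - α) - 1) * A ^ (1:ℝ)) := by
        rw [← ENNReal.rpow_add_of_nonneg ((p/2 - α) - 1) (1:ℝ) (by linarith) (by norm_num)]
        congr 1
        congr 1
        linarith
    _ ≤ CS ^ t * s ^ α * (M'' ^ ((p/2 - α) - 1) * A ^ (1:ℝ)) :=
        mul_le_mul' le_rfl (mul_le_mul' (ENNReal.rpow_le_rpow hAM (by linarith)) le_rfl)
    _ = CS ^ t * M'' ^ (p/2 - α - 1) * s ^ α * A := by
        rw [ENNReal.rpow_one]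
        ring






set_option maxHeartbeats 1000000 in
/-- Lions' vanishing lemma, quantitative form. -/
theorem lions {N : ℕ} (hN : 3 ≤ N) {p : ℝ} (hp : 2 < p)
    (hp' : p < 2 * N / ((N : ℝ) - 2)) {ρ : ℝ} (hρ : 0 < ρ)
    (M' : ℝ≥0∞) (hM' : M' ≠ ∞) :
    ∃ (C : ℝ≥0∞) (α : ℝ) (D : ℝ≥0∞), C ≠ ∞ ∧ 0 < α ∧ 1 ≤ D ∧ D ≠ ∞ ∧
      ∀ w : EuclideanSpace ℝ (Fin N) → ℝ, Differentiable ℝ w →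
      (∫⁻ x, ((‖fderiv ℝ w x‖₊ : ℝ≥0∞) ^ (2:ℝ) + (‖w x‖₊ : ℝ≥0∞) ^ (2:ℝ))) ≤ M' →
      ∀ s : ℝ≥0∞,
      (∀ c : EuclideanSpace ℝ (Fin N),
        (∫⁻ x in Metric.ball c ρ, (‖w x‖₊ : ℝ≥0∞) ^ (2:ℝ)) ≤ s) →
      ∫⁻ x, (‖w x‖₊ : ℝ≥0∞) ^ p ≤ C * s ^ α := by
  obtain ⟨C₀, α, D, hC₀, hα, hD1, hDne, hball⟩ := ball_est hN hp hp' hρ M' hM'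
  have hN0 : (0:ℝ) < N := by positivity
  set d : ℝ := ρ / N with hddef
  have hd : 0 < d := div_pos hρ hN0
  -- the lattice
  set y : (Fin N → ℤ) → EuclideanSpace ℝ (Fin N) :=
    fun k => WithLp.toLp 2 (fun i => (k i : ℝ) * d) with hydef
  -- coordinates are dominated by the distance
  have hcoord : ∀ (u v : EuclideanSpace ℝ (Fin N)) (i : Fin N),
      dist (u i) (v i) ≤ dist u v := by
    intro u v i
    rw [EuclideanSpace.dist_eq]
    have h1 : dist (u i) (v i) ^ 2 ≤ ∑ j, dist (u j) (v j) ^ 2 :=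
      Finset.single_le_sum (f := fun j => dist (u j) (v j) ^ 2)
        (fun j _ => sq_nonneg _) (Finset.mem_univ i)
    calc dist (u i) (v i) = Real.sqrt (dist (u i) (v i) ^ 2) :=
          (Real.sqrt_sq dist_nonneg).symm
      _ ≤ _ := Real.sqrt_le_sqrt h1
  -- covering
  have hcover : (⋃ k, Metric.ball (y k) ρ) = Set.univ := by
    apply Set.eq_univ_of_forall
    intro x
    rw [mem_iUnion]
    refine ⟨fun i => round ((x i) / d), ?_⟩
    rw [Metric.mem_ball, EuclideanSpace.dist_eq]
    have hco : ∀ i, dist (x i) ((y fun i => round ((x i) / d)) i) ^ 2 ≤ (d/2)^2 := by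
      intro i
      have h1 : |x i / d - round (x i / d)| ≤ 1/2 := (abs_sub_round _).trans (by norm_num)
      have h2 : dist (x i) ((round (x i / d) : ℝ) * d) ≤ d / 2 := by
        rw [Real.dist_eq]
        have : x i - (round (x i / d) : ℝ) * d = (x i / d - round (x i / d)) * d := by
          field_simp
        rw [this, abs_mul, abs_of_pos hd]
        calc |x i / d - (round (x i / d) : ℝ)| * d ≤ (1/2) * d := by gcongr
          _ = d / 2 := by ring
      have h3 : (0:ℝ) ≤ d/2 := by positivity
      calc dist (x i) ((y fun i => round ((x i) / d)) i) ^ 2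
          = dist (x i) ((round (x i / d) : ℝ) * d) ^ 2 := rfl
        _ ≤ (d/2)^2 := by
            apply sq_le_sq' _ h2
            linarith [dist_nonneg (x := x i) (y := (round (x i / d) : ℝ) * d)]
    calc Real.sqrt (∑ i, dist (x i) ((y fun i => round ((x i) / d)) i) ^ 2)
        ≤ Real.sqrt (∑ _i : Fin N, (d/2)^2) := by
          apply Real.sqrt_le_sqrt
          exact Finset.sum_le_sum fun i _ => hco i
      _ < ρ := by
          rw [Finset.sum_const, Finset.card_univ, Fintype.card_fin, nsmul_eq_mul]
          have : (N:ℝ) * (d/2)^2 < ρ^2 := by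
            rw [hddef]
            have hkey : (N:ℝ) * ((ρ/(N:ℝ))/2)^2 = ρ^2/(4*(N:ℝ)) := by
              field_simp
              ring
            rw [hkey, div_lt_iff₀ (by positivity)]
            have hN3 : (3:ℝ) ≤ N := by exact_mod_cast hN
            nlinarith [pow_pos hρ 2]
          calc Real.sqrt ((N:ℝ) * (d/2)^2) < Real.sqrt (ρ^2) := by
                apply Real.sqrt_lt_sqrt (by positivity) this
            _ = ρ := Real.sqrt_sq hρ.le
  -- bounded overlap
  set K : ℕ := (4*N+1)^N with hKdef
  have hoverlap : ∀ x : EuclideanSpace ℝ (Fin N),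
      (∑' k : Fin N → ℤ, (Metric.closedBall (y k) (2*ρ)).indicator
        (fun _ => (1:ℝ≥0∞)) x) ≤ K := by
    intro x
    classical
    set klo : Fin N → ℤ := fun i => ⌈(x i - 2*ρ)/d⌉ with hklo
    set khi : Fin N → ℤ := fun i => ⌊(x i + 2*ρ)/d⌋ with hkhi
    have hsub : ∀ k : Fin N → ℤ, x ∈ Metric.closedBall (y k) (2*ρ) →
        k ∈ Finset.Icc klo khi := by
      intro k hk
      rw [Metric.mem_closedBall] at hk
      rw [Finset.mem_Icc]
      constructor
      · intro i
        have h1 : dist (x i) ((k i : ℝ) * d) ≤ 2*ρ := le_trans (hcoord x (y k) i) hk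
        rw [Real.dist_eq, abs_le] at h1
        rw [hklo]
        simp only
        rw [Int.ceil_le]
        rw [div_le_iff₀ hd]
        linarith [h1.1]
      · intro i
        have h1 : dist (x i) ((k i : ℝ) * d) ≤ 2*ρ := le_trans (hcoord x (y k) i) hk
        rw [Real.dist_eq, abs_le] at h1
        rw [hkhi]
        simp only
        rw [Int.le_floor]
        rw [le_div_iff₀ hd]
        linarith [h1.2]
    have hzero : ∀ k ∉ Finset.Icc klo khi,
        (Metric.closedBall (y k) (2*ρ)).indicator (fun _ => (1:ℝ≥0∞)) x = 0 := by
      intro k hk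
      rw [Set.indicator_of_notMem]
      intro hmem
      exact hk (hsub k hmem)
    rw [tsum_eq_sum hzero]
    calc ∑ k ∈ Finset.Icc klo khi,
          (Metric.closedBall (y k) (2*ρ)).indicator (fun _ => (1:ℝ≥0∞)) x
        ≤ ∑ _k ∈ Finset.Icc klo khi, (1:ℝ≥0∞) := by
          apply Finset.sum_le_sum
          intro k _
          exact Set.indicator_le_self _ _ x
      _ = ((Finset.Icc klo khi).card : ℝ≥0∞) := by
          rw [Finset.sum_const, nsmul_eq_mul, mul_one]
      _ ≤ (K : ℝ≥0∞) := by
          have hcard : (Finset.Icc klo khi).card ≤ K := by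
            rw [Pi.card_Icc, hKdef]
            have hper : ∀ i ∈ (Finset.univ : Finset (Fin N)),
                (Finset.Icc (klo i) (khi i)).card ≤ 4*N+1 := by
              intro i _
              rw [Int.card_Icc]
              have hreal : (khi i : ℝ) - klo i ≤ 4*N := by
                have h1 : (khi i : ℝ) ≤ (x i + 2*ρ)/d := Int.floor_le _
                have h2 : (x i - 2*ρ)/d ≤ (klo i : ℝ) := Int.le_ceil _
                have h3 : (x i + 2*ρ)/d - (x i - 2*ρ)/d = 4*ρ/d := by ring
                have h4 : 4*ρ/d = 4*N := by
                  rw [hddef]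
                  field_simp
                linarith
              have hint : khi i + 1 - klo i ≤ (4*N+1 : ℤ) := by
                have : (khi i : ℝ) + 1 - klo i ≤ 4*N+1 := by linarith
                exact_mod_cast this
              calc (khi i + 1 - klo i).toNat ≤ ((4*N+1 : ℤ)).toNat := Int.toNat_le_toNat hint
                _ = 4*N+1 := by omega
            calc ∏ i : Fin N, (Finset.Icc (klo i) (khi i)).card
                ≤ (4*N+1) ^ (Finset.univ : Finset (Fin N)).card :=
                  Finset.prod_le_pow_card _ _ _ hper
              _ = (4*N+1)^N := by rw [Finset.card_univ, Fintype.card_fin]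
          exact_mod_cast hcard
  -- summing the local estimates
  set M'' : ℝ≥0∞ := 4 * D ^ (2:ℝ) * M' with hM''def
  have hM''ne : M'' ≠ ∞ := ENNReal.mul_ne_top
    (ENNReal.mul_ne_top (by norm_num) (ENNReal.rpow_ne_top_of_nonneg (by norm_num) hDne)) hM'
  refine ⟨C₀ * K * M'', α, D, ?_, hα, hD1, hDne, ?_⟩
  · exact ENNReal.mul_ne_top (ENNReal.mul_ne_top hC₀ (by simp)) hM''ne
  intro w hw hglob2 s hs
  have hglob : (∫⁻ x, ((‖fderiv ℝ w x‖₊ : ℝ≥0∞) + D * ‖w x‖₊) ^ (2:ℝ)) ≤ M'' :=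
    glob_H D hD1 hDne w M' hglob2
  set H : EuclideanSpace ℝ (Fin N) → ℝ≥0∞ :=
    fun x => ((‖fderiv ℝ w x‖₊ : ℝ≥0∞) + D * ‖w x‖₊) ^ (2:ℝ) with hHdef
  have hHm : Measurable H := by
    apply Measurable.pow_const
    exact ((measurable_fderiv ℝ w).nnnorm.coe_nnreal_ennreal).add
      (measurable_const.mul (hw.continuous.measurable.nnnorm.coe_nnreal_ennreal))
  have hsumA : (∑' k : Fin N → ℤ, ∫⁻ x in Metric.closedBall (y k) (2*ρ), H x) ≤ K * M'' := by
    have h1 : ∀ k : Fin N → ℤ, (∫⁻ x in Metric.closedBall (y k) (2*ρ), H x)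
        = ∫⁻ x, (Metric.closedBall (y k) (2*ρ)).indicator H x := by
      intro k
      rw [lintegral_indicator measurableSet_closedBall]
    calc (∑' k : Fin N → ℤ, ∫⁻ x in Metric.closedBall (y k) (2*ρ), H x)
        = ∫⁻ x, ∑' k : Fin N → ℤ, (Metric.closedBall (y k) (2*ρ)).indicator H x := by
          simp_rw [h1]
          rw [← lintegral_tsum]
          intro k
          exact (hHm.indicator measurableSet_closedBall).aemeasurable
      _ ≤ ∫⁻ x, (K : ℝ≥0∞) * H x := by
          apply lintegral_mono
          intro x
          have h2 : ∀ k : Fin N → ℤ, (Metric.closedBall (y k) (2*ρ)).indicator H x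
              = H x * (Metric.closedBall (y k) (2*ρ)).indicator (fun _ => (1:ℝ≥0∞)) x := by
            intro k
            by_cases hx : x ∈ Metric.closedBall (y k) (2*ρ)
            · rw [Set.indicator_of_mem hx, Set.indicator_of_mem hx, mul_one]
            · rw [Set.indicator_of_notMem hx, Set.indicator_of_notMem hx, mul_zero]
          calc ∑' k : Fin N → ℤ, (Metric.closedBall (y k) (2*ρ)).indicator H x
              = H x * ∑' k : Fin N → ℤ,
                  (Metric.closedBall (y k) (2*ρ)).indicator (fun _ => (1:ℝ≥0∞)) x := by
                simp_rw [h2]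
                exact ENNReal.tsum_mul_left
            _ ≤ H x * K := by
                gcongr
                exact hoverlap x
            _ = (K : ℝ≥0∞) * H x := mul_comm _ _
      _ = (K : ℝ≥0∞) * ∫⁻ x, H x := lintegral_const_mul' _ _ (by simp)
      _ ≤ (K : ℝ≥0∞) * M'' := by gcongr
  calc ∫⁻ x, (‖w x‖₊ : ℝ≥0∞) ^ p
      = ∫⁻ x in (⋃ k : Fin N → ℤ, Metric.ball (y k) ρ), (‖w x‖₊ : ℝ≥0∞) ^ p := by
        rw [hcover, setLIntegral_univ]
    _ ≤ ∑' k : Fin N → ℤ, ∫⁻ x in Metric.ball (y k) ρ, (‖w x‖₊ : ℝ≥0∞) ^ p :=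
        lintegral_iUnion_le _ _
    _ ≤ ∑' k : Fin N → ℤ, C₀ * s ^ α * ∫⁻ x in Metric.closedBall (y k) (2*ρ), H x := by
        apply ENNReal.tsum_le_tsum
        intro k
        exact hball w hw hglob2 (y k) s (hs (y k))
    _ = C₀ * s ^ α * ∑' k : Fin N → ℤ, ∫⁻ x in Metric.closedBall (y k) (2*ρ), H x :=
        ENNReal.tsum_mul_left
    _ ≤ C₀ * s ^ α * (K * M'') := by gcongr
    _ = C₀ * K * M'' * s ^ α := by ring





lemma sq_nnnorm_eq {G : Type*} [NormedAddCommGroup G] (v : G) :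
    ((‖v‖₊ : ℝ≥0∞)) ^ (2:ℝ) = ENNReal.ofReal (‖v‖^2) := by
  rw [← enorm_eq_nnnorm, ← ofReal_norm_eq_enorm, ENNReal.ofReal_rpow_of_nonneg (norm_nonneg v) (by norm_num)]
  congr 1
  rw [show (2:ℝ) = ((2:ℕ):ℝ) by norm_num, Real.rpow_natCast]

lemma rpow_nnnorm_eq (r : ℝ) {p : ℝ} (hp : 0 ≤ p) :
    ((‖r‖₊ : ℝ≥0∞)) ^ p = ENNReal.ofReal (|r|^p) := by
  rw [← enorm_eq_nnnorm, ← ofReal_norm_eq_enorm, ENNReal.ofReal_rpow_of_nonneg (norm_nonneg r) hp,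
    Real.norm_eq_abs]



end WLV
/-- Weighted Lions vanishing lemma: if `{u_n}` is bounded in `H¹(ℝ^N)` and
`sup_{y} ∫_{B(y,ρ)} u_n² → 0`, then `∫ K_* |u_n|^p → 0`, for a weight `K_* ≥ 0` that is
bounded outside every neighborhood of `0` and such that `v ↦ K_*^{1/p}v` is compact from
`H¹` into `L^p_loc` (encoded as uniform smallness of `∫_{|x|≤δ} K_* |w|^p`). -/
theorem weighted_lions_vanishing (N : ℕ) (hN : 3 ≤ N)
    (p : ℝ) (hp : 2 < p) (hp' : p < 2 * (N : ℝ) / ((N : ℝ) - 2)) (ρ : ℝ) (hρ : 0 < ρ)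
    (Kst : EuclideanSpace ℝ (Fin N) → ℝ)
    (hK0 : ∀ x, 0 ≤ Kst x)
    (hKc : ContinuousOn Kst {(0 : EuclideanSpace ℝ (Fin N))}ᶜ)
    (hKb : ∀ δ > (0 : ℝ), ∃ M : ℝ, ∀ x : EuclideanSpace ℝ (Fin N), δ ≤ ‖x‖ → Kst x ≤ M)
    (hcpt : ∀ ε > (0 : ℝ), ∃ δ > (0 : ℝ), ∀ w : EuclideanSpace ℝ (Fin N) → ℝ,
      Differentiable ℝ w →
      MemLp w 2 (volume : Measure (EuclideanSpace ℝ (Fin N))) →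
      MemLp (fun x => gradient w x) 2 (volume : Measure (EuclideanSpace ℝ (Fin N))) →
      (∫ x, ‖gradient w x‖ ^ 2 + (w x) ^ 2) ≤ 1 →
      ∫ x in {x : EuclideanSpace ℝ (Fin N) | ‖x‖ ≤ δ}, Kst x * |w x| ^ p ≤ ε)
    (u : ℕ → EuclideanSpace ℝ (Fin N) → ℝ)
    (hdiff : ∀ n, Differentiable ℝ (u n))
    (hu2 : ∀ n, MemLp (u n) 2 (volume : Measure (EuclideanSpace ℝ (Fin N))))
    (hgrad : ∀ n, MemLp (fun x => gradient (u n) x) 2 (volume : Measure (EuclideanSpace ℝ (Fin N))))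
    (M : ℝ) (hbd : ∀ n, (∫ x, ‖gradient (u n) x‖ ^ 2 + (u n x) ^ 2) ≤ M)
    (hvanish : Tendsto
      (fun n => ⨆ y : EuclideanSpace ℝ (Fin N), ∫ x in Metric.ball y ρ, (u n x) ^ 2)
      atTop (𝓝 0)) :
    Tendsto (fun n => ∫ x, Kst x * |u n x| ^ p) atTop (𝓝 0) := by
  classical
  have hp0 : (0:ℝ) ≤ p := by linarith
  have ngrad : ∀ (f : EuclideanSpace ℝ (Fin N) → ℝ) (x : EuclideanSpace ℝ (Fin N)),
      ‖gradient f x‖ = ‖fderiv ℝ f x‖ := by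
    intro f x
    rw [gradient]
    exact LinearIsometryEquiv.norm_map _ _
  set B : ℝ := max M 1 with hBdef
  have hB1 : (1:ℝ) ≤ B := le_max_right _ _
  have hB0 : (0:ℝ) < B := lt_of_lt_of_le one_pos hB1
  have hMB : M ≤ B := le_max_left _ _
  -- integrability of the squares
  have hint1 : ∀ n, Integrable (fun x => ‖gradient (u n) x‖^2)
      (volume : Measure (EuclideanSpace ℝ (Fin N))) := by
    intro n
    have h := (hgrad n).integrable_norm_rpow (by norm_num) (by norm_num)
    have : ∀ x : EuclideanSpace ℝ (Fin N),
        ‖gradient (u n) x‖ ^ ((2:ℝ≥0∞).toReal) = ‖gradient (u n) x‖^2 := by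
      intro x
      rw [ENNReal.toReal_ofNat, show ((2:ℝ)) = ((2:ℕ):ℝ) by norm_num, Real.rpow_natCast]
    simpa [this] using h
  have hint2 : ∀ n, Integrable (fun x => (u n x)^2)
      (volume : Measure (EuclideanSpace ℝ (Fin N))) := by
    intro n
    have h := (hu2 n).integrable_norm_rpow (by norm_num) (by norm_num)
    have : ∀ x : EuclideanSpace ℝ (Fin N),
        ‖u n x‖ ^ ((2:ℝ≥0∞).toReal) = (u n x)^2 := by
      intro x
      rw [ENNReal.toReal_ofNat, show ((2:ℝ)) = ((2:ℕ):ℝ) by norm_num, Real.rpow_natCast,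
        Real.norm_eq_abs, sq_abs]
    simpa [this] using h
  -- the global ℝ≥0∞ bound
  have hglob : ∀ n, (∫⁻ x, ((‖fderiv ℝ (u n) x‖₊ : ℝ≥0∞) ^ (2:ℝ) +
      (‖u n x‖₊ : ℝ≥0∞) ^ (2:ℝ))) ≤ ENNReal.ofReal B := by
    intro n
    have hpt : ∀ x, (‖fderiv ℝ (u n) x‖₊ : ℝ≥0∞) ^ (2:ℝ) + (‖u n x‖₊ : ℝ≥0∞) ^ (2:ℝ)
        = ENNReal.ofReal (‖gradient (u n) x‖^2 + (u n x)^2) := by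
      intro x
      rw [ENNReal.ofReal_add (by positivity) (sq_nonneg _), WLV.sq_nnnorm_eq, WLV.sq_nnnorm_eq]
      congr 2
      · rw [ngrad]
      · rw [Real.norm_eq_abs, sq_abs]
    calc (∫⁻ x, ((‖fderiv ℝ (u n) x‖₊ : ℝ≥0∞) ^ (2:ℝ) + (‖u n x‖₊ : ℝ≥0∞) ^ (2:ℝ)))
        = ∫⁻ x, ENNReal.ofReal (‖gradient (u n) x‖^2 + (u n x)^2) := lintegral_congr hpt
      _ = ENNReal.ofReal (∫ x, ‖gradient (u n) x‖^2 + (u n x)^2) :=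
          (ofReal_integral_eq_lintegral_ofReal ((hint1 n).add (hint2 n))
            (Filter.Eventually.of_forall fun x => add_nonneg (sq_nonneg _) (sq_nonneg _))).symm
      _ ≤ ENNReal.ofReal B := ENNReal.ofReal_le_ofReal ((hbd n).trans hMB)
  -- Lions' lemma
  obtain ⟨C, α, D, hCne, hα, hD1, hDne, hlions⟩ :=
    WLV.lions hN hp hp' hρ (ENNReal.ofReal B) ENNReal.ofReal_ne_top
  set S : ℕ → ℝ := fun n => ⨆ y : EuclideanSpace ℝ (Fin N),
    ∫ x in Metric.ball y ρ, (u n x) ^ 2 with hSdef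
  have hsb : ∀ n (c : EuclideanSpace ℝ (Fin N)),
      (∫⁻ x in Metric.ball c ρ, (‖u n x‖₊ : ℝ≥0∞) ^ (2:ℝ)) ≤ ENNReal.ofReal (S n) := by
    intro n c
    have h1 : (∫⁻ x in Metric.ball c ρ, (‖u n x‖₊ : ℝ≥0∞) ^ (2:ℝ))
        = ENNReal.ofReal (∫ x in Metric.ball c ρ, (u n x)^2) := by
      have hpt : ∀ x : EuclideanSpace ℝ (Fin N),
          (‖u n x‖₊ : ℝ≥0∞) ^ (2:ℝ) = ENNReal.ofReal ((u n x)^2) := by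
        intro x
        rw [WLV.sq_nnnorm_eq, Real.norm_eq_abs, sq_abs]
      rw [lintegral_congr hpt]
      exact (ofReal_integral_eq_lintegral_ofReal ((hint2 n).restrict)
        (Filter.Eventually.of_forall fun x => sq_nonneg _)).symm
    rw [h1]
    apply ENNReal.ofReal_le_ofReal
    have hbdd : BddAbove (Set.range fun y : EuclideanSpace ℝ (Fin N) =>
        ∫ x in Metric.ball y ρ, (u n x)^2) := by
      refine ⟨∫ x, (u n x)^2, ?_⟩
      rintro _ ⟨y, rfl⟩
      exact setIntegral_le_integral (hint2 n)
        (Filter.Eventually.of_forall fun x => sq_nonneg _)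
    exact le_ciSup_of_le hbdd c le_rfl
  have hT : ∀ n, (∫⁻ x, (‖u n x‖₊ : ℝ≥0∞) ^ p) ≤ C * (ENNReal.ofReal (S n)) ^ α :=
    fun n => hlions (u n) (hdiff n) (hglob n) _ (hsb n)
  -- start the ε-argument
  rw [Metric.tendsto_atTop]
  intro ε hε
  set c0 : ℝ := Real.sqrt B with hc0def
  have hc0 : 0 < c0 := Real.sqrt_pos.mpr hB0
  have hc0sq : c0^2 = B := Real.sq_sqrt hB0.le
  have hBp : (0:ℝ) < B ^ (p/2) := Real.rpow_pos_of_pos hB0 _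
  have hcp : c0 ^ p = B ^ (p/2) := by
    rw [hc0def, Real.sqrt_eq_rpow, ← Real.rpow_mul hB0.le]
    congr 1
    ring
  set ε1 : ℝ := (ε/2) / B ^ (p/2) with hε1def
  have hε1 : 0 < ε1 := by positivity
  obtain ⟨δ, hδ0, hδ⟩ := hcpt ε1 hε1
  obtain ⟨M₁, hM₁⟩ := hKb δ hδ0
  set M₂ : ℝ := max M₁ 0 with hM₂def
  have hM₂0 : (0:ℝ) ≤ M₂ := le_max_right _ _
  have hM₂ : ∀ x : EuclideanSpace ℝ (Fin N), δ ≤ ‖x‖ → Kst x ≤ M₂ :=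
    fun x hx => (hM₁ x hx).trans (le_max_left _ _)
  set η : ℝ≥0∞ := ENNReal.ofReal ((ε/2) / (M₂+1)) with hηdef
  have hη0 : 0 < η := by
    rw [hηdef]
    apply ENNReal.ofReal_pos.mpr
    positivity
  -- eventually the p-lintegral is at most η
  have hsmall : ∀ᶠ n in atTop, (∫⁻ x, (‖u n x‖₊ : ℝ≥0∞) ^ p) ≤ η := by
    have hsfin : ∀ n, (ENNReal.ofReal (S n)) ^ α ≠ ∞ :=
      fun n => ENNReal.rpow_ne_top_of_nonneg hα.le ENNReal.ofReal_ne_top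
    by_cases hC0 : C = 0
    · apply Filter.Eventually.of_forall
      intro n
      calc (∫⁻ x, (‖u n x‖₊ : ℝ≥0∞) ^ p) ≤ C * (ENNReal.ofReal (S n)) ^ α := hT n
        _ = 0 := by rw [hC0, zero_mul]
        _ ≤ η := zero_le
    · set ζ : ℝ≥0∞ := (η / C) ^ α⁻¹ with hζdef
      have hηCne : η / C ≠ ∞ := (ENNReal.div_lt_top ENNReal.ofReal_ne_top hC0).ne
      have hζ0 : 0 < ζ := ENNReal.rpow_pos (ENNReal.div_pos hη0.ne' hCne) hηCne
      have htend : Tendsto (fun n => ENNReal.ofReal (S n)) atTop (𝓝 0) := by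
        have h := ENNReal.tendsto_ofReal hvanish
        simpa using h
      have hev : ∀ᶠ n in atTop, ENNReal.ofReal (S n) ≤ ζ :=
        (ENNReal.tendsto_nhds_zero.mp htend) ζ hζ0
      filter_upwards [hev] with n hn
      calc (∫⁻ x, (‖u n x‖₊ : ℝ≥0∞) ^ p) ≤ C * (ENNReal.ofReal (S n)) ^ α := hT n
        _ ≤ C * ζ ^ α := by gcongr
        _ = C * (η / C) := by
            rw [hζdef, ← ENNReal.rpow_mul, inv_mul_cancel₀ hα.ne', ENNReal.rpow_one]
        _ ≤ η := ENNReal.mul_div_le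
  obtain ⟨n₀, hn₀⟩ := Filter.eventually_atTop.mp hsmall
  refine ⟨n₀, fun n hn => ?_⟩
  have hTn := hn₀ n hn
  have hnn : 0 ≤ ∫ x, Kst x * |u n x| ^ p :=
    integral_nonneg fun x => mul_nonneg (hK0 x) (Real.rpow_nonneg (abs_nonneg _) _)
  rw [dist_zero_right, Real.norm_eq_abs, abs_of_nonneg hnn]
  by_cases hInt : Integrable (fun x => Kst x * |u n x| ^ p)
      (volume : Measure (EuclideanSpace ℝ (Fin N)))
  swap
  · rw [integral_undef hInt]
    exact hε
  -- integrability of |u n|^p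
  have hIntp : Integrable (fun x => |u n x| ^ p)
      (volume : Measure (EuclideanSpace ℝ (Fin N))) := by
    constructor
    · exact (((hdiff n).continuous.abs).rpow_const fun x => Or.inr hp0).aestronglyMeasurable
    · rw [hasFiniteIntegral_iff_norm]
      have hpt : ∀ x : EuclideanSpace ℝ (Fin N),
          ENNReal.ofReal ‖|u n x| ^ p‖ = (‖u n x‖₊ : ℝ≥0∞) ^ p := by
        intro x
        rw [WLV.rpow_nnnorm_eq _ hp0, Real.norm_eq_abs,
          abs_of_nonneg (Real.rpow_nonneg (abs_nonneg _) _)]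
      rw [lintegral_congr hpt]
      exact lt_of_le_of_lt hTn (by rw [hηdef]; exact ENNReal.ofReal_lt_top)
  have hSδm : MeasurableSet {x : EuclideanSpace ℝ (Fin N) | ‖x‖ ≤ δ} :=
    (isClosed_le continuous_norm continuous_const).measurableSet
  have hsplit := integral_add_compl hSδm hInt
  -- inner estimate via hcpt
  have hinner : (∫ x in {x : EuclideanSpace ℝ (Fin N) | ‖x‖ ≤ δ}, Kst x * |u n x| ^ p) ≤ ε/2 := by
    set w : EuclideanSpace ℝ (Fin N) → ℝ := fun x => c0⁻¹ * u n x with hwdef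
    have hwdiff : Differentiable ℝ w := (hdiff n).const_mul _
    have hw2 : MemLp w 2 volume := (hu2 n).const_mul _
    have hwgrad : (fun x => gradient w x) = fun x => c0⁻¹ • gradient (u n) x := by
      funext x
      rw [hwdef]
      rw [gradient, gradient, fderiv_const_mul ((hdiff n) x) c0⁻¹]
      exact _root_.map_smul _ _ _
    have hwgradmem : MemLp (fun x => gradient w x) 2 volume := by
      rw [hwgrad]
      exact (hgrad n).const_smul c0⁻¹
    have henergy : (∫ x, ‖gradient w x‖ ^ 2 + (w x) ^ 2) ≤ 1 := by
      have hc2 : (c0⁻¹)^2 = B⁻¹ := by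
        rw [inv_pow, hc0sq]
      have hpt : ∀ x, ‖gradient w x‖ ^ 2 + (w x) ^ 2
          = B⁻¹ * (‖gradient (u n) x‖ ^ 2 + (u n x) ^ 2) := by
        intro x
        have h1 : gradient w x = c0⁻¹ • gradient (u n) x := congrFun hwgrad x
        rw [h1, norm_smul, Real.norm_eq_abs, abs_of_nonneg (inv_nonneg.mpr hc0.le), hwdef]
        simp only
        calc (c0⁻¹ * ‖gradient (u n) x‖)^2 + (c0⁻¹ * u n x)^2
            = (c0⁻¹)^2 * (‖gradient (u n) x‖^2 + (u n x)^2) := by ring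
          _ = B⁻¹ * (‖gradient (u n) x‖^2 + (u n x)^2) := by rw [hc2]
      calc (∫ x, ‖gradient w x‖ ^ 2 + (w x) ^ 2)
          = ∫ x, B⁻¹ * (‖gradient (u n) x‖ ^ 2 + (u n x) ^ 2) := by
            exact integral_congr_ae (Filter.Eventually.of_forall hpt)
        _ = B⁻¹ * ∫ x, (‖gradient (u n) x‖ ^ 2 + (u n x) ^ 2) := integral_const_mul _ _
        _ ≤ B⁻¹ * B := by
            apply mul_le_mul_of_nonneg_left ((hbd n).trans hMB) (inv_nonneg.mpr hB0.le)
        _ = 1 := inv_mul_cancel₀ hB0.ne'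
    have happ := hδ w hwdiff hw2 hwgradmem henergy
    have hptw : ∀ x, Kst x * |w x| ^ p = (B ^ (p/2))⁻¹ * (Kst x * |u n x| ^ p) := by
      intro x
      rw [hwdef]
      simp only
      rw [abs_mul, Real.mul_rpow (abs_nonneg _) (abs_nonneg _),
        abs_of_nonneg (inv_nonneg.mpr hc0.le), Real.inv_rpow hc0.le, hcp]
      ring
    have heq : (∫ x in {x : EuclideanSpace ℝ (Fin N) | ‖x‖ ≤ δ}, Kst x * |w x| ^ p)
        = (B ^ (p/2))⁻¹ * ∫ x in {x : EuclideanSpace ℝ (Fin N) | ‖x‖ ≤ δ},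
            Kst x * |u n x| ^ p := by
      rw [show (fun x => Kst x * |w x| ^ p)
        = fun x => (B ^ (p/2))⁻¹ * (Kst x * |u n x| ^ p) from funext hptw]
      exact integral_const_mul _ _
    rw [heq] at happ
    have h2 := mul_le_mul_of_nonneg_left happ hBp.le
    rw [← mul_assoc, mul_inv_cancel₀ hBp.ne', one_mul, hε1def,
      mul_div_cancel₀ _ hBp.ne'] at h2
    exact h2
  -- outer estimate
  have houter : (∫ x in {x : EuclideanSpace ℝ (Fin N) | ‖x‖ ≤ δ}ᶜ, Kst x * |u n x| ^ p)
      < ε/2 := by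
    have hIntT : ∫ x, |u n x| ^ p ≤ (ε/2) / (M₂+1) := by
      have h1 : ∫ x, |u n x| ^ p = (∫⁻ x, (‖u n x‖₊ : ℝ≥0∞) ^ p).toReal := by
        rw [integral_eq_lintegral_of_nonneg_ae
          (Filter.Eventually.of_forall fun x => Real.rpow_nonneg (abs_nonneg _) _)
          hIntp.1]
        congr 1
        apply lintegral_congr
        intro x
        rw [WLV.rpow_nnnorm_eq _ hp0]
      rw [h1]
      calc (∫⁻ x, (‖u n x‖₊ : ℝ≥0∞) ^ p).toReal ≤ η.toReal :=
            ENNReal.toReal_mono (by rw [hηdef]; exact ENNReal.ofReal_ne_top) hTn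
        _ = (ε/2) / (M₂+1) := by
            rw [hηdef]
            exact ENNReal.toReal_ofReal (by positivity)
    calc (∫ x in {x : EuclideanSpace ℝ (Fin N) | ‖x‖ ≤ δ}ᶜ, Kst x * |u n x| ^ p)
        ≤ ∫ x in {x : EuclideanSpace ℝ (Fin N) | ‖x‖ ≤ δ}ᶜ, M₂ * |u n x| ^ p := by
          apply setIntegral_mono_on hInt.integrableOn (hIntp.const_mul M₂).integrableOn
            hSδm.compl
          intro x hx
          apply mul_le_mul_of_nonneg_right _ (Real.rpow_nonneg (abs_nonneg _) _)
          apply hM₂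
          rw [Set.mem_compl_iff, Set.mem_setOf_eq, not_le] at hx
          exact hx.le
      _ = M₂ * ∫ x in {x : EuclideanSpace ℝ (Fin N) | ‖x‖ ≤ δ}ᶜ, |u n x| ^ p :=
          integral_const_mul _ _
      _ ≤ M₂ * ∫ x, |u n x| ^ p := by
          apply mul_le_mul_of_nonneg_left _ hM₂0
          exact setIntegral_le_integral hIntp
            (Filter.Eventually.of_forall fun x => Real.rpow_nonneg (abs_nonneg _) _)
      _ ≤ M₂ * ((ε/2) / (M₂+1)) := mul_le_mul_of_nonneg_left hIntT hM₂0
      _ < ε/2 := by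
          have h2 : M₂ * ((ε/2) / (M₂+1)) = (ε/2) * (M₂/(M₂+1)) := by ring
          rw [h2]
          have h3 : M₂/(M₂+1) < 1 := by
            rw [div_lt_one (by positivity)]
            linarith
          calc (ε/2) * (M₂/(M₂+1)) < (ε/2) * 1 := by
                apply mul_lt_mul_of_pos_left h3 (by positivity)
            _ = ε/2 := mul_one _
  calc (∫ x, Kst x * |u n x| ^ p)
      = (∫ x in {x : EuclideanSpace ℝ (Fin N) | ‖x‖ ≤ δ}, Kst x * |u n x| ^ p)
        + ∫ x in {x : EuclideanSpace ℝ (Fin N) | ‖x‖ ≤ δ}ᶜ, Kst x * |u n x| ^ p := hsplit.symm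
    _ < ε/2 + ε/2 := by
        apply add_lt_add_of_le_of_lt hinner houter
    _ = ε := by ring
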